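/- Let g(T) = 1 + 1/(0.0068 T² + 0.0008 T + 0.458). Then the function T ↦ g(T) is NOT convex on all of (0, ∞); specifically, there exist points 0 < T₁ < T₂ < 11 and λ ∈ (0,1) demonstrating that x ↦ log g(e^x) fails to be convex on (−∞, log 11). Equivalently, the second derivative of F(x) = log g(e^x) is negative at some x < log 11. -/

import Mathlib

noncomputable def CoP (T : ℝ) : ℝ := 0.0068 * T ^ 2 + 0.0008 * T + 0.458

noncomputable def gCoP (T : ℝ) : ℝ := 1 + 1 / CoP T

noncomputable def Fll (x : ℝ) : ℝ := Real.log (gCoP (Real.exp x))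

lemma CoP_pos (T : ℝ) (hT : 0 ≤ T) : 0 < CoP T := by
  unfold CoP; positivity

lemma hasDerivAt_CoP_exp (x : ℝ) :
    HasDerivAt (fun x => CoP (Real.exp x))
      (0.0068 * (2 * Real.exp x * Real.exp x) + 0.0008 * Real.exp x) x := by
  have he := Real.hasDerivAt_exp x
  have h1 : HasDerivAt (fun x => Real.exp x ^ 2) (2 * Real.exp x ^ 1 * Real.exp x) x := he.pow 2
  have h2 := ((h1.const_mul (0.0068 : ℝ)).add (he.const_mul (0.0008 : ℝ))).add_const (0.458 : ℝ)
  refine h2.congr_deriv ?_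
  ring

lemma hasDerivAt_Fll (x : ℝ) :
    HasDerivAt Fll
      ((-(0.0068 * (2 * Real.exp x * Real.exp x) + 0.0008 * Real.exp x) / (CoP (Real.exp x)) ^ 2)
        / (1 + 1 / CoP (Real.exp x))) x := by
  have hP := hasDerivAt_CoP_exp x
  have hPpos : 0 < CoP (Real.exp x) := CoP_pos _ (Real.exp_pos x).le
  have hinv : HasDerivAt (fun x => (CoP (Real.exp x))⁻¹)
      (-(0.0068 * (2 * Real.exp x * Real.exp x) + 0.0008 * Real.exp x) / (CoP (Real.exp x)) ^ 2) x :=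
    hP.inv hPpos.ne'
  have hg : HasDerivAt (fun x => 1 + (CoP (Real.exp x))⁻¹)
      (-(0.0068 * (2 * Real.exp x * Real.exp x) + 0.0008 * Real.exp x) / (CoP (Real.exp x)) ^ 2) x :=
    hinv.const_add 1
  have hgpos : 0 < 1 + (CoP (Real.exp x))⁻¹ := by positivity
  have h := hg.log hgpos.ne'
  have heq : Fll = fun y => Real.log (1 + (CoP (Real.exp y))⁻¹) := by
    funext y; simp [Fll, gCoP, one_div]
  rw [heq]
  simpa [one_div] using h

lemma deriv_Fll : deriv Fll = fun x =>
    (-(0.0068 * (2 * Real.exp x * Real.exp x) + 0.0008 * Real.exp x) / (CoP (Real.exp x)) ^ 2)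
      / (1 + 1 / CoP (Real.exp x)) := by
  funext x; exact (hasDerivAt_Fll x).deriv

lemma hasDerivAt_G (x : ℝ) :
    HasDerivAt (fun x =>
      -(0.0068 * (2 * Real.exp x * Real.exp x) + 0.0008 * Real.exp x) / CoP (Real.exp x) ^ 2
        / (1 + 1 / CoP (Real.exp x)))
      (((((-(0.0136 * (2 * Real.exp x ^ 1 * Real.exp x) + 0.0008 * Real.exp x)) * (CoP (Real.exp x) ^ 2) - -(0.0068 * (2 * Real.exp x * Real.exp x) + 0.0008 * Real.exp x) * (2 * CoP (Real.exp x) ^ 1 * (0.0068 * (2 * Real.exp x * Real.exp x) + 0.0008 * Real.exp x))) / (CoP (Real.exp x) ^ 2) ^ 2) * (1 + 1 / CoP (Real.exp x)) - (-(0.0068 * (2 * Real.exp x * Real.exp x) + 0.0008 * Real.exp x) / CoP (Real.exp x) ^ 2) * (-(0.0068 * (2 * Real.exp x * Real.exp x) + 0.0008 * Real.exp x) / CoP (Real.exp x) ^ 2)) / (1 + 1 / CoP (Real.exp x)) ^ 2) x := by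
  have he := Real.hasDerivAt_exp x
  have hPpos : 0 < CoP (Real.exp x) := CoP_pos _ (Real.exp_pos x).le
  have hP := hasDerivAt_CoP_exp x
  -- numerator of G
  have hD : HasDerivAt (fun x => -(0.0068 * (2 * Real.exp x * Real.exp x) + 0.0008 * Real.exp x))
      (-(0.0136 * (2 * Real.exp x ^ 1 * Real.exp x) + 0.0008 * Real.exp x)) x := by
    have h1 : HasDerivAt (fun x => Real.exp x ^ 2) (2 * Real.exp x ^ 1 * Real.exp x) x := he.pow 2
    have h2 := (((h1.const_mul (0.0136 : ℝ)).add (he.const_mul (0.0008 : ℝ)))).neg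
    refine h2.congr_of_eventuallyEq (Filter.Eventually.of_forall fun y => ?_)
    simp only [Pi.neg_apply, Pi.add_apply]; ring
  have hP2 : HasDerivAt (fun x => CoP (Real.exp x) ^ 2)
      (2 * CoP (Real.exp x) ^ 1 * (0.0068 * (2 * Real.exp x * Real.exp x) + 0.0008 * Real.exp x)) x :=
    hP.pow 2
  have hN := hD.div hP2 (pow_ne_zero 2 hPpos.ne')
  -- denominator of G
  have hM : HasDerivAt (fun x => 1 + 1 / CoP (Real.exp x))
      (-(0.0068 * (2 * Real.exp x * Real.exp x) + 0.0008 * Real.exp x) / (CoP (Real.exp x)) ^ 2) x := by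
    have := (hP.inv hPpos.ne').const_add 1
    simpa [one_div] using this
  have hMpos : 0 < 1 + 1 / CoP (Real.exp x) := by positivity
  exact hN.div hM hMpos.ne'

/-- The log-log transform `F(x) = log g(eˣ)` of `g(T) = 1 + 1/CoP(T)` fails to be
convex on `(−∞, log 11)`; equivalently, its second derivative is negative at some
point below `log 11`. -/
theorem stmt18 :
    ¬ ConvexOn ℝ (Set.Iio (Real.log 11)) Fll ∧
    ∃ x : ℝ, x < Real.log 11 ∧ deriv (deriv Fll) x < 0 := by
  constructor
  · intro h
    have h9 : Real.log 9 ∈ Set.Iio (Real.log 11) :=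
      Set.mem_Iio.mpr (Real.log_lt_log (by norm_num) (by norm_num))
    have h0 : (0 : ℝ) ∈ Set.Iio (Real.log 11) :=
      Set.mem_Iio.mpr (Real.log_pos (by norm_num))
    have key := h.2 h0 h9 (by norm_num : (0:ℝ) ≤ 1/2) (by norm_num : (0:ℝ) ≤ 1/2)
      (by norm_num : (1:ℝ)/2 + 1/2 = 1)
    simp only [smul_eq_mul, mul_zero, zero_add] at key
    have l9 : Real.log 9 = 2 * Real.log 3 := by
      rw [show (9:ℝ) = 3 ^ 2 by norm_num, Real.log_pow]; push_cast; ring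
    have harg : 1 / 2 * Real.log 9 = Real.log 3 := by rw [l9]; ring
    rw [harg] at key
    have e3 : Fll (Real.log 3) = Real.log (gCoP 3) := by
      rw [Fll, Real.exp_log (by norm_num)]
    have e0 : Fll 0 = Real.log (gCoP 1) := by rw [Fll, Real.exp_zero]
    have e9 : Fll (Real.log 9) = Real.log (gCoP 9) := by
      rw [Fll, Real.exp_log (by norm_num)]
    rw [e3, e0, e9] at key
    have g1pos : 0 < gCoP 1 := by unfold gCoP CoP; norm_num
    have g3pos : 0 < gCoP 3 := by unfold gCoP CoP; norm_num
    have g9pos : 0 < gCoP 9 := by unfold gCoP CoP; norm_num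
    have hlog : Real.log (gCoP 3 ^ 2) ≤ Real.log (gCoP 1 * gCoP 9) := by
      rw [Real.log_pow, Real.log_mul g1pos.ne' g9pos.ne']
      push_cast; linarith
    have hle : gCoP 3 ^ 2 ≤ gCoP 1 * gCoP 9 :=
      (Real.log_le_log_iff (by positivity) (by positivity)).mp hlog
    unfold gCoP CoP at hle
    norm_num at hle
  · refine ⟨0, Real.log_pos (by norm_num), ?_⟩
    rw [deriv_Fll]
    rw [(hasDerivAt_G 0).deriv]
    norm_num [Real.exp_zero, CoP]
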